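/- arXiv:2402.15603 — 2 statements merged into one kernel-verified Lean document; each statement's English description precedes it below -/
import Mathlib

section
/- Let b₀, b₁ > 0 and η₀, η₁ ∈ (0,1]. Then (Lap(b₀) ⊗ Lap(b₁)){(l₀,l₁) ∈ ℝ² : D(l₀,l₁) > err*(G(l₀,l₁)) + (5/2)·(b₀·log(1/η₀) + b₁·log(1/η₁))} ≤ η₀ + η₁. (Utility guarantee of Theorem 2: with probability at least 1 − η₀ − η₁ over the independent Laplace noises, the prediction-change sum of Algorithm 2's classifier exceeds the optimal prediction-change sum among classifiers with the same statistical parity gap by at most (5/2)(log(1/η₀)/(n₀ε₂) + log(1/η₁)/(n₁ε₃)), where b₀ = 1/(n₀ε₂) and b₁ = 1/(n₁ε₃).) -/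
open MeasureTheory

/-- The Laplace distribution on `ℝ` with scale `b`. -/
noncomputable def Lap (b : ℝ) : Measure ℝ :=
  volume.withDensity fun x => ENNReal.ofReal ((2 * b)⁻¹ * Real.exp (-|x| / b))

/-- Projection onto `[0,1]`. -/
noncomputable def clip (x : ℝ) : ℝ := min (max x 0) 1

/-- The statistical parity gap of Algorithm 2's classifier as a function of the Laplace
noise realizations `(l₀, l₁)`, with clipped perturbed rates `α̃ = [α+l₀]₀¹`,
`β̃ = [β+l₁]₀¹` (division by zero yields `0`, as in Lean's convention). -/
noncomputable def G (α β l₀ l₁ : ℝ) : ℝ :=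
  let αt := clip (α + l₀)
  let βt := clip (β + l₁)
  if βt ≤ αt then
    |α * (αt + βt) / (2 * αt) - β - (1 - β) * (αt - βt) / (2 * (1 - βt))|
  else
    |β * (αt + βt) / (2 * βt) - α - (1 - α) * (βt - αt) / (2 * (1 - αt))|

/-- The prediction-change sum of Algorithm 2's classifier relative to the input
classifiers, as a function of the Laplace noise realizations `(l₀, l₁)`. -/
noncomputable def Dsum (α β l₀ l₁ : ℝ) : ℝ :=
  let αt := clip (α + l₀)
  let βt := clip (β + l₁)
  if βt ≤ αt then
    α * (αt - βt) / (2 * αt) + (1 - β) * (αt - βt) / (2 * (1 - βt))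
  else
    β * (βt - αt) / (2 * βt) + (1 - α) * (βt - αt) / (2 * (1 - αt))

/-- `err*(γ)`: the optimal prediction-change sum among pairs of measurable classifiers
whose statistical parity gap is at most `γ`. -/
noncomputable def errStar {𝒳 : Type*} [MeasurableSpace 𝒳]
    (μ₀ μ₁ : Measure 𝒳) (h₀ h₁ : 𝒳 → Bool) (γ : ℝ) : ℝ :=
  sInf { r : ℝ | ∃ g₀ g₁ : 𝒳 → Bool, Measurable g₀ ∧ Measurable g₁ ∧
    |(μ₀ {x | g₀ x = true}).toReal - (μ₁ {x | g₁ x = true}).toReal| ≤ γ ∧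
    r = (μ₀ {x | g₀ x ≠ h₀ x}).toReal + (μ₁ {x | g₁ x ≠ h₁ x}).toReal }

section Auxiliary

open Real Set

lemma abs_comb {e0 e1 r0 r1 t₀ t₁ : ℝ} (h0 : |e0| ≤ t₀) (h1 : |e1| ≤ t₁)
    (hr0 : 0 ≤ r0) (hr0' : r0 ≤ 1) (hr1 : 0 ≤ r1) (hr1' : r1 ≤ 1) :
    |e0 * (r0 - 1) - e1 * (r1 - 1)| ≤ t₀ + t₁ :=
  calc |e0 * (r0 - 1) - e1 * (r1 - 1)| ≤ |e0 * (r0 - 1)| + |e1 * (r1 - 1)| := abs_sub _ _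
    _ = |e0| * |r0 - 1| + |e1| * |r1 - 1| := by rw [abs_mul, abs_mul]
    _ ≤ t₀ * 1 + t₁ * 1 := by
        apply add_le_add <;> apply mul_le_mul <;>
          first
          | assumption
          | exact abs_nonneg _
          | exact le_trans (abs_nonneg _) ‹_›
          | (rw [abs_le]; constructor <;> linarith)
    _ = t₀ + t₁ := by ring

lemma core_ineq {Ds s T : ℝ} (h0 : 0 ≤ Ds) (h1 : |Ds - s| ≤ T) :
    Ds ≤ max (|s| - |s - Ds|) 0 + (5/2)*T := by
  have hT : 0 ≤ T := le_trans (abs_nonneg _) h1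
  have h2 : |s - Ds| ≤ T := by rwa [abs_sub_comm]
  have hm1 : |s| - |s - Ds| ≤ max (|s| - |s - Ds|) 0 := le_max_left _ _
  have hm2 : (0:ℝ) ≤ max (|s| - |s - Ds|) 0 := le_max_right _ _
  rcases abs_cases (s - Ds) with ⟨e1, _⟩ | ⟨e1, _⟩ <;>
    rcases abs_cases s with ⟨e2, _⟩ | ⟨e2, _⟩ <;> linarith

lemma branch_ineq (a b u v t₀ t₁ : ℝ)
    (ha0 : 0 ≤ a) (ha1 : a ≤ 1) (hb0 : 0 ≤ b) (hb1 : b ≤ 1)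
    (hu0 : 0 ≤ u) (hu1 : u ≤ 1) (hv0 : 0 ≤ v) (hv1 : v ≤ 1)
    (he0 : |u - a| ≤ t₀) (he1 : |v - b| ≤ t₁) (hle : v ≤ u) :
    a*(u-v)/(2*u) + (1-b)*(u-v)/(2*(1-v)) ≤
      max (|a-b| - |a*(u+v)/(2*u) - b - (1-b)*(u-v)/(2*(1-v))|) 0 + (5/2)*(t₀+t₁) := by
  have hT0 : 0 ≤ t₀ := le_trans (abs_nonneg _) he0
  have hT1 : 0 ≤ t₁ := le_trans (abs_nonneg _) he1
  have hRHS0 : (0:ℝ) ≤ max (|a-b| - |a*(u+v)/(2*u) - b - (1-b)*(u-v)/(2*(1-v))|) 0 + (5/2)*(t₀+t₁) :=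
    add_nonneg (le_max_right _ _) (by positivity)
  rcases eq_or_lt_of_le hu0 with h | hupos
  · -- u = 0, hence v = 0
    have hv : v = 0 := le_antisymm (h ▸ hle) hv0
    rw [← h, hv] at hRHS0 ⊢
    norm_num at hRHS0 ⊢
    exact hRHS0
  rcases eq_or_lt_of_le hv1 with h | hvlt
  · -- v = 1, hence u = 1
    have hu : u = 1 := le_antisymm hu1 (h ▸ hle)
    rw [hu, h] at hRHS0 ⊢
    norm_num at hRHS0 ⊢
    exact hRHS0
  have hden0 : (2*u) ≠ 0 := by positivity
  have hden1 : (2*(1-v)) ≠ 0 := ne_of_gt (by linarith)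
  have huv : 0 ≤ u - v := by linarith
  have hr0a : 0 ≤ (u-v)/(2*u) := div_nonneg huv (by linarith)
  have hr0b : (u-v)/(2*u) ≤ 1/2 := by
    rw [div_le_iff₀ (by linarith)]; linarith
  have hr1a : 0 ≤ (u-v)/(2*(1-v)) := div_nonneg huv (by linarith)
  have hr1b : (u-v)/(2*(1-v)) ≤ 1/2 := by
    rw [div_le_iff₀ (by linarith)]; linarith
  set r0 := (u-v)/(2*u) with hr0def
  set r1 := (u-v)/(2*(1-v)) with hr1def
  set Ds := a*r0 + (1-b)*r1 with hDs
  have hgoal_lhs : a*(u-v)/(2*u) + (1-b)*(u-v)/(2*(1-v)) = Ds := by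
    rw [hDs, hr0def, hr1def]; ring
  have hsub : a*(u+v)/(2*u) - b - (1-b)*(u-v)/(2*(1-v)) = (a - b) - Ds := by
    rw [hDs, hr0def, hr1def]; field_simp; ring
  rw [hgoal_lhs, hsub]
  have hid : Ds - (a - b) = (a-u)*(r0 - 1) - (b-v)*(r1 - 1) := by
    rw [hDs, hr0def, hr1def]; field_simp; ring
  have hDs0 : 0 ≤ Ds := by
    rw [hDs]
    have := mul_nonneg ha0 hr0a
    have := mul_nonneg (by linarith : (0:ℝ) ≤ 1 - b) hr1a
    linarith
  have hkey : |Ds - (a - b)| ≤ t₀ + t₁ := by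
    rw [hid]
    exact abs_comb (by rwa [abs_sub_comm]) (by rwa [abs_sub_comm])
      hr0a (by linarith) hr1a (by linarith)
  exact core_ineq hDs0 hkey

lemma clip_mem (x : ℝ) : 0 ≤ clip x ∧ clip x ≤ 1 :=
  ⟨le_min (le_max_right _ _) zero_le_one, min_le_right _ _⟩

lemma clip_lip (x y : ℝ) : |clip x - clip y| ≤ |x - y| := by
  unfold clip
  refine le_trans (abs_min_sub_min_le_max _ _ _ _) ?_
  simp only [sub_self, abs_zero]
  refine max_le (le_trans (abs_max_sub_max_le_max _ _ _ _) ?_) (abs_nonneg _)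
  simp [abs_nonneg]

lemma G_nonneg (α β l₀ l₁ : ℝ) : 0 ≤ G α β l₀ l₁ := by
  unfold G; dsimp only; split_ifs <;> exact abs_nonneg _

lemma key_ineq {α β l₀ l₁ t₀ t₁ : ℝ}
    (hα0 : 0 ≤ α) (hα1 : α ≤ 1) (hβ0 : 0 ≤ β) (hβ1 : β ≤ 1)
    (h0 : |l₀| ≤ t₀) (h1 : |l₁| ≤ t₁) :
    Dsum α β l₀ l₁ ≤ max (|α - β| - G α β l₀ l₁) 0 + (5/2)*(t₀+t₁) := by
  have hcα : clip α = α := by unfold clip; rw [max_eq_left hα0, min_eq_left hα1]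
  have hcβ : clip β = β := by unfold clip; rw [max_eq_left hβ0, min_eq_left hβ1]
  have he0 : |clip (α + l₀) - α| ≤ t₀ := by
    calc |clip (α + l₀) - α| = |clip (α + l₀) - clip α| := by rw [hcα]
      _ ≤ |(α + l₀) - α| := clip_lip _ _
      _ = |l₀| := by ring_nf
      _ ≤ t₀ := h0
  have he1 : |clip (β + l₁) - β| ≤ t₁ := by
    calc |clip (β + l₁) - β| = |clip (β + l₁) - clip β| := by rw [hcβ]
      _ ≤ |(β + l₁) - β| := clip_lip _ _
      _ = |l₁| := by ring_nf
      _ ≤ t₁ := h1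
  obtain ⟨hu0, hu1⟩ := clip_mem (α + l₀)
  obtain ⟨hv0, hv1⟩ := clip_mem (β + l₁)
  unfold Dsum G
  dsimp only
  split_ifs with h
  · exact branch_ineq α β _ _ t₀ t₁ hα0 hα1 hβ0 hβ1 hu0 hu1 hv0 hv1 he0 he1 h
  · have := branch_ineq β α _ _ t₁ t₀ hβ0 hβ1 hα0 hα1 hv0 hv1 hu0 hu1 he1 he0
      (le_of_lt (not_le.mp h))
    rw [abs_sub_comm β α, add_comm (clip (β + l₁)) (clip (α + l₀))] at this
    linarith [this]

lemma abs_prob_diff_le {𝒳 : Type*} [MeasurableSpace 𝒳] (μ : Measure 𝒳)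
    [IsProbabilityMeasure μ] (g h : 𝒳 → Bool) :
    |(μ {x | g x = true}).toReal - (μ {x | h x = true}).toReal| ≤
      (μ {x | g x ≠ h x}).toReal := by
  have key : ∀ g' h' : 𝒳 → Bool,
      (μ {x | g' x = true}).toReal ≤ (μ {x | h' x = true}).toReal + (μ {x | g' x ≠ h' x}).toReal := by
    intro g' h'
    have hsub : {x | g' x = true} ⊆ {x | h' x = true} ∪ {x | g' x ≠ h' x} := by
      intro x hx
      by_cases hh : h' x = true
      · exact Or.inl hh
      · exact Or.inr (by simp only [Set.mem_setOf_eq] at *; simp [hx, hh])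
    have hle : μ {x | g' x = true} ≤ μ {x | h' x = true} + μ {x | g' x ≠ h' x} :=
      le_trans (measure_mono hsub) (measure_union_le _ _)
    have hfin : μ {x | h' x = true} + μ {x | g' x ≠ h' x} ≠ ⊤ :=
      ENNReal.add_ne_top.mpr ⟨measure_ne_top _ _, measure_ne_top _ _⟩
    have := ENNReal.toReal_mono hfin hle
    rwa [ENNReal.toReal_add (measure_ne_top _ _) (measure_ne_top _ _)] at this
  have h1 := key g h
  have h2 := key h g
  have hsymm : {x | h x ≠ g x} = {x | g x ≠ h x} := by ext x; simp [ne_comm]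
  rw [hsymm] at h2
  rw [abs_le]; constructor <;> linarith

lemma errStar_lb {𝒳 : Type*} [MeasurableSpace 𝒳] (μ₀ μ₁ : Measure 𝒳)
    [IsProbabilityMeasure μ₀] [IsProbabilityMeasure μ₁]
    (h₀ h₁ : 𝒳 → Bool) (γ : ℝ) (hγ : 0 ≤ γ) :
    max (|(μ₀ {x | h₀ x = true}).toReal - (μ₁ {x | h₁ x = true}).toReal| - γ) 0 ≤
      errStar μ₀ μ₁ h₀ h₁ γ := by
  apply le_csInf
  · refine ⟨(μ₀ {x | (fun _ => false) x ≠ h₀ x}).toReal +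
      (μ₁ {x | (fun _ => false) x ≠ h₁ x}).toReal,
      fun _ => false, fun _ => false, measurable_const, measurable_const, ?_, rfl⟩
    simp
    exact hγ
  · rintro r ⟨g₀, g₁, -, -, hgap, rfl⟩
    refine max_le ?_ (add_nonneg ENNReal.toReal_nonneg ENNReal.toReal_nonneg)
    have d0 := abs_prob_diff_le μ₀ g₀ h₀
    have d1 := abs_prob_diff_le μ₁ g₁ h₁
    have t0 := abs_le.mp d0
    have t1 := abs_le.mp d1
    have t2 := abs_le.mp hgap
    rcases abs_cases ((μ₀ {x | h₀ x = true}).toReal - (μ₁ {x | h₁ x = true}).toReal) with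
      ⟨e, _⟩ | ⟨e, _⟩ <;> linarith

lemma exp_int (b t : ℝ) (hb : 0 < b) :
    ∫ x in Ioi t, Real.exp (-x / b) = b * Real.exp (-t / b) := by
  have h := integral_comp_mul_left_Ioi (fun x => Real.exp (-x)) t (inv_pos.mpr hb)
  simp only [smul_eq_mul, inv_inv] at h
  have e1 : (fun x : ℝ => Real.exp (-(b⁻¹ * x))) = fun x : ℝ => Real.exp (-x / b) := by
    funext x; congr 1; field_simp
  rw [e1] at h
  rw [h, integral_exp_neg_Ioi]
  congr 2
  field_simp

lemma lap_intOn (b t : ℝ) (hb : 0 < b) :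
    IntegrableOn (fun x : ℝ => (2*b)⁻¹ * Real.exp (-x / b)) (Ioi t) := by
  have := (exp_neg_integrableOn_Ioi t (inv_pos.mpr hb)).const_mul ((2*b)⁻¹)
  have e1 : (fun x : ℝ => (2*b)⁻¹ * Real.exp (-b⁻¹ * x)) =
      fun x : ℝ => (2*b)⁻¹ * Real.exp (-x / b) := by
    funext x; congr 2; field_simp
  rwa [e1] at this

lemma lap_half (b t : ℝ) (hb : 0 < b) (ht : 0 ≤ t) :
    ∫⁻ x in Ioi t, ENNReal.ofReal ((2 * b)⁻¹ * Real.exp (-|x| / b)) =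
      ENNReal.ofReal (Real.exp (-t / b) / 2) := by
  have hcong : ∀ x ∈ Ioi t, ENNReal.ofReal ((2 * b)⁻¹ * Real.exp (-|x| / b)) =
      ENNReal.ofReal ((2 * b)⁻¹ * Real.exp (-x / b)) := by
    intro x hx
    rw [abs_of_pos (lt_of_le_of_lt ht hx)]
  rw [setLIntegral_congr_fun measurableSet_Ioi hcong]
  rw [← ofReal_integral_eq_lintegral_ofReal (lap_intOn b t hb)
    (Filter.Eventually.of_forall fun x => by positivity)]
  rw [integral_const_mul, exp_int b t hb]
  congr 1
  field_simp

lemma lap_half_neg (b t : ℝ) (hb : 0 < b) (ht : 0 ≤ t) :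
    ∫⁻ x in Iic (-t), ENNReal.ofReal ((2 * b)⁻¹ * Real.exp (-|x| / b)) =
      ENNReal.ofReal (Real.exp (-t / b) / 2) := by
  have mp := Measure.measurePreserving_neg (volume : Measure ℝ)
  have h := mp.setLIntegral_comp_preimage_emb (Homeomorph.neg ℝ).measurableEmbedding
    (fun x => ENNReal.ofReal ((2 * b)⁻¹ * Real.exp (-|x| / b))) (Iic (-t))
  have hpre : (Neg.neg : ℝ → ℝ) ⁻¹' Iic (-t) = Ici t := by
    ext x; simp
  rw [hpre] at h
  simp only [abs_neg] at h
  rw [← h, ← setLIntegral_congr (MeasureTheory.Ioi_ae_eq_Ici (a := t) (μ := volume)),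
    lap_half b t hb ht]

lemma lap_univ (b : ℝ) (hb : 0 < b) : Lap b Set.univ = 1 := by
  rw [Lap, withDensity_apply _ MeasurableSet.univ, Measure.restrict_univ,
    ← lintegral_add_compl _ (measurableSet_Iic (a := (0:ℝ)))]
  have h1 : (Iic (0:ℝ))ᶜ = Ioi 0 := compl_Iic
  have h2 : Iic (0:ℝ) = Iic (-0) := by norm_num
  rw [h1, h2, lap_half_neg b 0 hb le_rfl, lap_half b 0 hb le_rfl]
  rw [← ENNReal.ofReal_add (by positivity) (by positivity)]
  norm_num

lemma lap_tail (b t : ℝ) (hb : 0 < b) (ht : 0 ≤ t) :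
    Lap b {x | t < |x|} ≤ ENNReal.ofReal (Real.exp (-t / b)) := by
  have hsub : {x : ℝ | t < |x|} ⊆ Iic (-t) ∪ Ioi t := by
    intro x hx
    simp only [mem_setOf_eq] at hx
    rcases abs_cases x with ⟨h, _⟩ | ⟨h, _⟩
    · right; exact h ▸ hx
    · left; simp only [mem_Iic]; rw [h] at hx; linarith
  calc Lap b {x : ℝ | t < |x|} ≤ Lap b (Iic (-t) ∪ Ioi t) := measure_mono hsub
    _ ≤ Lap b (Iic (-t)) + Lap b (Ioi t) := measure_union_le _ _
    _ = ENNReal.ofReal (Real.exp (-t / b) / 2) + ENNReal.ofReal (Real.exp (-t / b) / 2) := by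
        rw [Lap, withDensity_apply _ measurableSet_Iic, withDensity_apply _ measurableSet_Ioi,
          lap_half_neg b t hb ht, lap_half b t hb ht]
    _ = ENNReal.ofReal (Real.exp (-t / b)) := by
        rw [← ENNReal.ofReal_add (by positivity) (by positivity)]; norm_num

lemma lap_prob (b : ℝ) (hb : 0 < b) : IsProbabilityMeasure (Lap b) :=
  ⟨lap_univ b hb⟩

end Auxiliary

/-- **Theorem 2 (utility guarantee).** With probability at least `1 − η₀ − η₁` over the
independent Laplace noises, the prediction-change sum of Algorithm 2's classifier exceeds
the optimal prediction-change sum among classifiers with the same statistical parity gap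
by at most `(5/2)·(b₀ log(1/η₀) + b₁ log(1/η₁))`. -/
theorem algorithm2_utility_whp
    {𝒳 : Type*} [MeasurableSpace 𝒳] [Nonempty 𝒳]
    (μ₀ μ₁ : Measure 𝒳) [IsProbabilityMeasure μ₀] [IsProbabilityMeasure μ₁]
    (h₀ h₁ : 𝒳 → Bool) (hm₀ : Measurable h₀) (hm₁ : Measurable h₁)
    (α β : ℝ)
    (hα : α = (μ₀ {x | h₀ x = true}).toReal)
    (hβ : β = (μ₁ {x | h₁ x = true}).toReal)
    (b₀ b₁ : ℝ) (hb₀ : 0 < b₀) (hb₁ : 0 < b₁)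
    (η₀ η₁ : ℝ) (hη₀ : η₀ ∈ Set.Ioc (0:ℝ) 1) (hη₁ : η₁ ∈ Set.Ioc (0:ℝ) 1) :
    ((Lap b₀).prod (Lap b₁))
        {p : ℝ × ℝ | Dsum α β p.1 p.2 >
          errStar μ₀ μ₁ h₀ h₁ (G α β p.1 p.2) +
            (5 / 2) * (b₀ * Real.log (1 / η₀) + b₁ * Real.log (1 / η₁))}
      ≤ ENNReal.ofReal (η₀ + η₁) := by
  obtain ⟨hη₀pos, hη₀le⟩ := hη₀
  obtain ⟨hη₁pos, hη₁le⟩ := hη₁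
  haveI := lap_prob b₀ hb₀
  haveI := lap_prob b₁ hb₁
  set t₀ := b₀ * Real.log (1 / η₀) with ht₀def
  set t₁ := b₁ * Real.log (1 / η₁) with ht₁def
  have hlog₀ : 0 ≤ Real.log (1 / η₀) := Real.log_nonneg (one_le_one_div hη₀pos hη₀le)
  have hlog₁ : 0 ≤ Real.log (1 / η₁) := Real.log_nonneg (one_le_one_div hη₁pos hη₁le)
  have ht₀ : 0 ≤ t₀ := mul_nonneg hb₀.le hlog₀
  have ht₁ : 0 ≤ t₁ := mul_nonneg hb₁.le hlog₁
  have hα0 : 0 ≤ α := hα ▸ ENNReal.toReal_nonneg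
  have hβ0 : 0 ≤ β := hβ ▸ ENNReal.toReal_nonneg
  have hα1 : α ≤ 1 := by
    rw [hα]
    exact le_trans (ENNReal.toReal_mono ENNReal.one_ne_top prob_le_one) (by norm_num)
  have hβ1 : β ≤ 1 := by
    rw [hβ]
    exact le_trans (ENNReal.toReal_mono ENNReal.one_ne_top prob_le_one) (by norm_num)
  -- inclusion of the bad event into large-noise events
  have hincl : {p : ℝ × ℝ | Dsum α β p.1 p.2 >
      errStar μ₀ μ₁ h₀ h₁ (G α β p.1 p.2) + (5 / 2) * (t₀ + t₁)} ⊆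
      ({x : ℝ | t₀ < |x|} ×ˢ Set.univ) ∪ (Set.univ ×ˢ {x : ℝ | t₁ < |x|}) := by
    intro p hp
    simp only [Set.mem_setOf_eq] at hp
    rcases lt_or_ge t₀ |p.1| with hc₀ | hc₀
    · exact Or.inl ⟨hc₀, Set.mem_univ _⟩
    rcases lt_or_ge t₁ |p.2| with hc₁ | hc₁
    · exact Or.inr ⟨Set.mem_univ _, hc₁⟩
    exfalso
    have k := key_ineq hα0 hα1 hβ0 hβ1 hc₀ hc₁
    have lb := errStar_lb μ₀ μ₁ h₀ h₁ (G α β p.1 p.2) (G_nonneg α β p.1 p.2)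
    rw [← hα, ← hβ] at lb
    linarith
  set Bad := {p : ℝ × ℝ | Dsum α β p.1 p.2 >
      errStar μ₀ μ₁ h₀ h₁ (G α β p.1 p.2) + (5 / 2) * (t₀ + t₁)} with hBad
  set U₀ := ({x : ℝ | t₀ < |x|} ×ˢ (Set.univ : Set ℝ)) with hU₀
  set U₁ := ((Set.univ : Set ℝ) ×ˢ {x : ℝ | t₁ < |x|}) with hU₁
  calc ((Lap b₀).prod (Lap b₁)) Bad
      ≤ ((Lap b₀).prod (Lap b₁)) (U₀ ∪ U₁) := measure_mono hincl
    _ ≤ ((Lap b₀).prod (Lap b₁)) U₀ + ((Lap b₀).prod (Lap b₁)) U₁ := measure_union_le _ _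
    _ = Lap b₀ {x : ℝ | t₀ < |x|} + Lap b₁ {x : ℝ | t₁ < |x|} := by
        rw [hU₀, hU₁, Measure.prod_prod, Measure.prod_prod]
        simp [measure_univ]
    _ ≤ ENNReal.ofReal (Real.exp (-t₀ / b₀)) + ENNReal.ofReal (Real.exp (-t₁ / b₁)) :=
        add_le_add (lap_tail b₀ t₀ hb₀ ht₀) (lap_tail b₁ t₁ hb₁ ht₁)
    _ = ENNReal.ofReal η₀ + ENNReal.ofReal η₁ := by
        have e₀ : Real.exp (-t₀ / b₀) = η₀ := by
          rw [ht₀def, show -(b₀ * Real.log (1 / η₀)) / b₀ = -Real.log (1 / η₀) by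
            field_simp, one_div, Real.log_inv, neg_neg, Real.exp_log hη₀pos]
        have e₁ : Real.exp (-t₁ / b₁) = η₁ := by
          rw [ht₁def, show -(b₁ * Real.log (1 / η₁)) / b₁ = -Real.log (1 / η₁) by
            field_simp, one_div, Real.log_inv, neg_neg, Real.exp_log hη₁pos]
        rw [e₀, e₁]
    _ = ENNReal.ofReal (η₀ + η₁) := (ENNReal.ofReal_add hη₀pos.le hη₁pos.le).symm
end

section
/- Let b₀, b₁ > 0. Then the expectation of the statistical parity gap of Algorithm 2's classifier over the independent Laplace noises satisfies ∫ G(l₀,l₁) d(Lap(b₀) ⊗ Lap(b₁)) ≤ b₀ + b₁. (Fairness guarantee of Proposition 2: E[Δ_SP] ≤ 1/(n₀ε₂) + 1/(n₁ε₃) with b₀ = 1/(n₀ε₂) and b₁ = 1/(n₁ε₃).) -/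
open MeasureTheory

open Real Set

lemma clip_mem_s5 (x : ℝ) : clip x ∈ Set.Icc (0:ℝ) 1 := by
  constructor
  · exact le_min (le_max_right _ _) zero_le_one
  · exact min_le_right _ _

lemma clip_sub_le {a : ℝ} (ha : a ∈ Set.Icc (0:ℝ) 1) (l : ℝ) : |clip (a + l) - a| ≤ |l| := by
  have hca : clip a = a := by
    simp only [clip, max_eq_left ha.1, min_eq_left ha.2]
  calc |clip (a + l) - a| = |clip (a + l) - clip a| := by rw [hca]
    _ ≤ max |max (a + l) 0 - max a 0| |(1:ℝ) - 1| := abs_min_sub_min_le_max _ _ _ _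
    _ ≤ |a + l - a| := by
        refine max_le ((abs_max_sub_max_le_abs _ _ _)) ?_
        simp [abs_nonneg]
    _ = |l| := by ring_nf

/-- The core algebraic bound. -/
lemma core_bound {α β u v : ℝ} (hα : α ∈ Set.Icc (0:ℝ) 1) (hβ : β ∈ Set.Icc (0:ℝ) 1)
    (hu : u ∈ Set.Icc (0:ℝ) 1) (hv : v ∈ Set.Icc (0:ℝ) 1) (huv : v ≤ u) :
    |α * (u + v) / (2 * u) - β - (1 - β) * (u - v) / (2 * (1 - v))| ≤ |u - α| + |v - β| := by
  obtain ⟨hα0, hα1⟩ := hα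
  obtain ⟨hβ0, hβ1⟩ := hβ
  obtain ⟨hu0, hu1⟩ := hu
  obtain ⟨hv0, hv1⟩ := hv
  rcases eq_or_lt_of_le hu0 with hu0' | hu0'
  · -- u = 0, hence v = 0
    have hv0' : v = 0 := le_antisymm (le_trans huv hu0'.symm.le) hv0
    subst hu0'
    subst hv0'
    have h1 : |(0:ℝ) - α| = α := by rw [abs_sub_comm, sub_zero, abs_of_nonneg hα0]
    have h2 : |(0:ℝ) - β| = β := by rw [abs_sub_comm, sub_zero, abs_of_nonneg hβ0]
    have h3 : α * (0 + 0) / (2 * 0) - β - (1 - β) * (0 - 0) / (2 * (1 - 0)) = -β := by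
      norm_num
    rw [h1, h2, h3, abs_neg, abs_of_nonneg hβ0]
    linarith
  · rcases eq_or_lt_of_le hv1 with hv1' | hv1'
    · -- v = 1, hence u = 1
      have hu1' : u = 1 := le_antisymm hu1 (hv1' ▸ huv)
      subst hu1'
      subst hv1'
      have h1 : |(1:ℝ) - α| = 1 - α := abs_of_nonneg (by linarith)
      have h2 : |(1:ℝ) - β| = 1 - β := abs_of_nonneg (by linarith)
      rw [h1, h2]
      have : α * (1 + 1) / (2 * 1) - β - (1 - β) * (1 - 1) / (2 * (1 - 1)) = α - β := by
        norm_num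
      rw [this]
      rcases abs_cases (α - β) with ⟨h, _⟩ | ⟨h, _⟩ <;> rw [h] <;> linarith
    · -- 0 < u, v < 1
      have h1v : 0 < 1 - v := by linarith
      have key : α * (u + v) / (2 * u) - β - (1 - β) * (u - v) / (2 * (1 - v)) =
          (u + v) / (2 * u) * (α - u) + (v - β) * (1 - (u - v) / (2 * (1 - v))) := by
        field_simp
        ring
      rw [key]
      have hA : |(u + v) / (2 * u) * (α - u)| ≤ |u - α| := by
        rw [abs_mul, abs_sub_comm u α]
        have hr0 : (0:ℝ) ≤ (u + v) / (2 * u) := by positivity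
        have hr1 : (u + v) / (2 * u) ≤ 1 := by
          rw [div_le_one (by linarith)]; linarith
        calc |(u + v) / (2 * u)| * |α - u| ≤ 1 * |α - u| := by
              rw [abs_of_nonneg hr0]
              exact mul_le_mul_of_nonneg_right hr1 (abs_nonneg _)
          _ = |α - u| := one_mul _
      have hB : |(v - β) * (1 - (u - v) / (2 * (1 - v)))| ≤ |v - β| := by
        rw [abs_mul]
        have hr0 : (0:ℝ) ≤ (u - v) / (2 * (1 - v)) := by
          apply div_nonneg <;> linarith
        have hr1 : (u - v) / (2 * (1 - v)) ≤ 1 := by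
          rw [div_le_one (by linarith)]; linarith
        calc |v - β| * |1 - (u - v) / (2 * (1 - v))| ≤ |v - β| * 1 := by
              refine mul_le_mul_of_nonneg_left ?_ (abs_nonneg _)
              rw [abs_of_nonneg (by linarith)]; linarith
          _ = |v - β| := mul_one _
      calc |(u + v) / (2 * u) * (α - u) + (v - β) * (1 - (u - v) / (2 * (1 - v)))|
          ≤ |(u + v) / (2 * u) * (α - u)| + |(v - β) * (1 - (u - v) / (2 * (1 - v)))| :=
            abs_add_le _ _
        _ ≤ |u - α| + |v - β| := add_le_add hA hB

lemma G_le {α β : ℝ} (hα : α ∈ Set.Icc (0:ℝ) 1) (hβ : β ∈ Set.Icc (0:ℝ) 1) (l₀ l₁ : ℝ) :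
    G α β l₀ l₁ ≤ |l₀| + |l₁| := by
  have h0 : |clip (α + l₀) - α| ≤ |l₀| := clip_sub_le hα l₀
  have h1 : |clip (β + l₁) - β| ≤ |l₁| := clip_sub_le hβ l₁
  simp only [G]
  split_ifs with h
  · exact le_trans (core_bound hα hβ (clip_mem_s5 _) (clip_mem_s5 _) h) (add_le_add h0 h1)
  · have h' : clip (α + l₀) ≤ clip (β + l₁) := le_of_lt (not_le.1 h)
    have := core_bound hβ hα (clip_mem_s5 (β + l₁)) (clip_mem_s5 (α + l₀)) h'
    rw [add_comm (clip (β + l₁)) (clip (α + l₀))] at this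
    exact le_trans this (by linarith)

/-! ### Integrals against the Laplace measure -/

lemma integrable_comp_abs {f : ℝ → ℝ} (hf : IntegrableOn (fun x => f |x|) (Ioi (0:ℝ))) :
    Integrable (fun x => f |x|) := by
  have int_Iic : IntegrableOn (fun x ↦ f |x|) (Iic 0) := by
    rw [← Measure.map_neg_eq_self (volume : Measure ℝ)]
    have m : MeasurableEmbedding fun x : ℝ => -x := (Homeomorph.neg ℝ).measurableEmbedding
    rw [m.integrableOn_map_iff]
    simp_rw [Function.comp_def, abs_neg, neg_preimage, neg_Iic, neg_zero]
    exact Iff.mpr integrableOn_Ici_iff_integrableOn_Ioi hf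
  have := int_Iic.union hf
  rwa [Iic_union_Ioi, integrableOn_univ] at this

lemma lapd_nonneg (b x : ℝ) (hb : 0 < b) : 0 ≤ (2 * b)⁻¹ * Real.exp (-|x| / b) := by
  positivity

lemma lapd_measurable (b : ℝ) : Measurable fun x : ℝ => (2 * b)⁻¹ * Real.exp (-|x| / b) :=
  (Real.measurable_exp.comp ((measurable_abs.neg).div_const b)).const_mul _

lemma lapd_integrableOn_Ioi {b : ℝ} (hb : 0 < b) :
    IntegrableOn (fun x : ℝ => Real.exp (-|x| / b)) (Ioi (0:ℝ)) := by
  have h := exp_neg_integrableOn_Ioi 0 (inv_pos.2 hb)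
  refine h.congr_fun (fun x hx => ?_) measurableSet_Ioi
  rw [abs_of_pos hx]
  ring_nf

lemma lapd_abs_integrableOn_Ioi {b : ℝ} (hb : 0 < b) :
    IntegrableOn (fun x : ℝ => |x| * Real.exp (-|x| / b)) (Ioi (0:ℝ)) := by
  have h := integrableOn_rpow_mul_exp_neg_mul_rpow (s := 1) (p := 1) (by norm_num)
    one_pos (inv_pos.2 hb)
  refine h.congr_fun (fun x hx => ?_) measurableSet_Ioi
  dsimp only
  rw [Real.rpow_one, abs_of_pos hx]
  have : -b⁻¹ * x = -x / b := by ring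
  rw [this]

lemma lapd_integrable {b : ℝ} (hb : 0 < b) :
    Integrable (fun x : ℝ => (2 * b)⁻¹ * Real.exp (-|x| / b)) := by
  have h : Integrable (fun x : ℝ => Real.exp (-|x| / b)) :=
    integrable_comp_abs (f := fun t => Real.exp (-t / b)) (lapd_integrableOn_Ioi hb)
  exact h.const_mul _

lemma lapd_abs_integrable {b : ℝ} (hb : 0 < b) :
    Integrable (fun x : ℝ => |x| * ((2 * b)⁻¹ * Real.exp (-|x| / b))) := by
  have h : Integrable (fun x : ℝ => |x| * Real.exp (-|x| / b)) :=
    integrable_comp_abs (f := fun t => t * Real.exp (-t / b)) (lapd_abs_integrableOn_Ioi hb)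
  have := h.const_mul ((2 * b)⁻¹)
  refine this.congr ?_
  filter_upwards with x
  ring

lemma integral_exp_neg_div_Ioi {b : ℝ} (hb : 0 < b) :
    ∫ x in Ioi (0:ℝ), Real.exp (-x / b) = b := by
  have h := Real.integral_rpow_mul_exp_neg_mul_Ioi (a := 1) (r := b⁻¹) one_pos (inv_pos.2 hb)
  rw [Real.Gamma_one, mul_one, one_div, inv_inv, Real.rpow_one] at h
  refine Eq.trans ?_ h
  refine setIntegral_congr_fun measurableSet_Ioi (fun x hx => ?_)
  rw [sub_self, Real.rpow_zero, one_mul]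
  congr 1
  ring

lemma integral_mul_exp_neg_div_Ioi {b : ℝ} (hb : 0 < b) :
    ∫ x in Ioi (0:ℝ), x * Real.exp (-x / b) = b ^ 2 := by
  have h := Real.integral_rpow_mul_exp_neg_mul_Ioi (a := 2) (r := b⁻¹) two_pos (inv_pos.2 hb)
  rw [Real.Gamma_two, mul_one, one_div, inv_inv] at h
  have hb2 : b ^ ((2:ℝ)) = b ^ 2 := by
    rw [show ((2:ℝ)) = ((2:ℕ) : ℝ) by norm_num, Real.rpow_natCast]
  rw [hb2] at h
  refine Eq.trans ?_ h
  refine setIntegral_congr_fun measurableSet_Ioi (fun x hx => ?_)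
  rw [show ((2:ℝ) - 1) = 1 by norm_num, Real.rpow_one]
  congr 1
  ring

lemma lapd_integral_one {b : ℝ} (hb : 0 < b) :
    ∫ x : ℝ, (2 * b)⁻¹ * Real.exp (-|x| / b) = 1 := by
  rw [show (∫ x : ℝ, (2 * b)⁻¹ * Real.exp (-|x| / b)) =
      2 * ∫ x in Ioi (0:ℝ), (2 * b)⁻¹ * Real.exp (-x / b) from
    integral_comp_abs (f := fun t => (2 * b)⁻¹ * Real.exp (-t / b))]
  rw [integral_const_mul, integral_exp_neg_div_Ioi hb]
  field_simp

lemma lapd_integral_abs {b : ℝ} (hb : 0 < b) :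
    ∫ x : ℝ, |x| * ((2 * b)⁻¹ * Real.exp (-|x| / b)) = b := by
  rw [show (∫ x : ℝ, |x| * ((2 * b)⁻¹ * Real.exp (-|x| / b))) =
      2 * ∫ x in Ioi (0:ℝ), x * ((2 * b)⁻¹ * Real.exp (-x / b)) from
    integral_comp_abs (f := fun t => t * ((2 * b)⁻¹ * Real.exp (-t / b)))]
  have : ∀ x : ℝ, x * ((2 * b)⁻¹ * Real.exp (-x / b)) = (2 * b)⁻¹ * (x * Real.exp (-x / b)) := by
    intro x; ring
  simp_rw [this]
  rw [integral_const_mul, integral_mul_exp_neg_div_Ioi hb]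
  field_simp

lemma lap_isProbability {b : ℝ} (hb : 0 < b) : IsProbabilityMeasure (Lap b) := by
  constructor
  rw [Lap, withDensity_apply _ MeasurableSet.univ, Measure.restrict_univ,
    ← ofReal_integral_eq_lintegral_ofReal (lapd_integrable hb)
      (Filter.Eventually.of_forall fun x => lapd_nonneg b x hb),
    lapd_integral_one hb, ENNReal.ofReal_one]

lemma lap_integral {b : ℝ} (hb : 0 < b) (g : ℝ → ℝ) :
    ∫ x, g x ∂(Lap b) = ∫ x, ((2 * b)⁻¹ * Real.exp (-|x| / b)) * g x := by
  rw [Lap]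
  have hmeas : Measurable fun x : ℝ => ((2 * b)⁻¹ * Real.exp (-|x| / b)).toNNReal :=
    (lapd_measurable b).real_toNNReal
  rw [show (fun x : ℝ => ENNReal.ofReal ((2 * b)⁻¹ * Real.exp (-|x| / b))) =
      fun x : ℝ => (((2 * b)⁻¹ * Real.exp (-|x| / b)).toNNReal : ENNReal) from rfl]
  rw [integral_withDensity_eq_integral_smul hmeas g]
  congr 1
  ext x
  rw [NNReal.smul_def, Real.coe_toNNReal _ (lapd_nonneg b x hb), smul_eq_mul]

lemma lap_integral_abs {b : ℝ} (hb : 0 < b) : ∫ x, |x| ∂(Lap b) = b := by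
  rw [lap_integral hb]
  have h : ∀ x : ℝ, ((2 * b)⁻¹ * Real.exp (-|x| / b)) * |x| =
      |x| * ((2 * b)⁻¹ * Real.exp (-|x| / b)) := fun x => mul_comm _ _
  simp_rw [h]
  exact lapd_integral_abs hb

lemma lap_integrable_abs {b : ℝ} (hb : 0 < b) : Integrable (fun x => |x|) (Lap b) := by
  rw [Lap, integrable_withDensity_iff ((lapd_measurable b).ennreal_ofReal)
      (Filter.Eventually.of_forall fun x => ENNReal.ofReal_lt_top)]
  refine (lapd_abs_integrable hb).congr ?_
  filter_upwards with x
  rw [ENNReal.toReal_ofReal (lapd_nonneg b x hb)]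

/-- **Proposition 2 (fairness guarantee).** The expected statistical parity gap of
Algorithm 2's classifier over the independent Laplace noises is at most `b₀ + b₁`. -/
theorem algorithm2_fairness_expectation
    (b₀ b₁ : ℝ) (hb₀ : 0 < b₀) (hb₁ : 0 < b₁)
    (α β : ℝ) (hα : α ∈ Set.Icc (0:ℝ) 1) (hβ : β ∈ Set.Icc (0:ℝ) 1) :
    ∫ p : ℝ × ℝ, G α β p.1 p.2 ∂((Lap b₀).prod (Lap b₁)) ≤ b₀ + b₁ := by
  have hP₀ : IsProbabilityMeasure (Lap b₀) := lap_isProbability hb₀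
  have hP₁ : IsProbabilityMeasure (Lap b₁) := lap_isProbability hb₁
  set μ := (Lap b₀).prod (Lap b₁) with hμ
  -- Integrability of the dominating function
  have hint₁ : Integrable (fun p : ℝ × ℝ => |p.1|) μ := by
    have h : Integrable (fun x : ℝ => |x|) (Lap b₀) := lap_integrable_abs hb₀
    have hmap : Measure.map Prod.fst μ = Lap b₀ := by
      rw [hμ, ← Measure.fst, Measure.fst_prod]
    have h2 : AEStronglyMeasurable (fun x : ℝ => |x|) (Measure.map Prod.fst μ) := by
      rw [hmap]; exact h.aestronglyMeasurable
    exact (integrable_map_measure h2 measurable_fst.aemeasurable).mp (by rwa [hmap])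
  have hint₂ : Integrable (fun p : ℝ × ℝ => |p.2|) μ := by
    have h : Integrable (fun x : ℝ => |x|) (Lap b₁) := lap_integrable_abs hb₁
    have hmap : Measure.map Prod.snd μ = Lap b₁ := by
      rw [hμ, ← Measure.snd, Measure.snd_prod]
    have h2 : AEStronglyMeasurable (fun x : ℝ => |x|) (Measure.map Prod.snd μ) := by
      rw [hmap]; exact h.aestronglyMeasurable
    exact (integrable_map_measure h2 measurable_snd.aemeasurable).mp (by rwa [hmap])
  have hint : Integrable (fun p : ℝ × ℝ => |p.1| + |p.2|) μ := hint₁.add hint₂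
  have hle : ∫ p : ℝ × ℝ, G α β p.1 p.2 ∂μ ≤ ∫ p : ℝ × ℝ, (|p.1| + |p.2|) ∂μ := by
    refine integral_mono_of_nonneg ?_ hint ?_
    · filter_upwards with p
      exact G_nonneg α β p.1 p.2
    · filter_upwards with p
      exact G_le hα hβ p.1 p.2
  have hval : ∫ p : ℝ × ℝ, (|p.1| + |p.2|) ∂μ = b₀ + b₁ := by
    rw [integral_add hint₁ hint₂]
    rw [hμ, integral_fun_fst (f := fun x : ℝ => |x|), integral_fun_snd (f := fun y : ℝ => |y|)]
    rw [measureReal_def, measureReal_def, measure_univ, measure_univ, ENNReal.toReal_one, one_smul, one_smul,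
      lap_integral_abs hb₀, lap_integral_abs hb₁]
  rw [← hval]
  exact hle
end
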